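/- Let D be a digraph and x a non-terminating chip-distribution on D such that in some legal game from x every vertex eventually fires. Then |x| ≥ minfas(D). -/

import Mathlib

/- Common definitions for chip-firing on multigraphs/digraphs.

A digraph (without a fixed vertex enumeration) on a finite vertex type `V`
is given by its arc-multiplicity function `a : V → V → ℕ` (`a u v` = number
of arcs from `u` to `v`).  An undirected multigraph is the special case of a
symmetric multiplicity function `d` (`d u v` = number of edges between `u`
and `v`); then `outDeg d v = ∑ u, d v u` is the degree of `v`, and
`∑ v, ∑ u, d v u = 2 |E|`. -/

variable {V : Type*} [Fintype V] [DecidableEq V]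

/-- Outdegree of `v` (= degree in the undirected, i.e. symmetric, case). -/
def outDeg (a : V → V → ℕ) (v : V) : ℕ := ∑ u, a v u

/-- Indegree of `v`. -/
def inDeg (a : V → V → ℕ) (v : V) : ℕ := ∑ u, a u v

/-- The distribution obtained from `x` by firing the vertex `v`:
`v` loses `outDeg a v` chips and each `u` receives `a v u` chips. -/
def fire (a : V → V → ℕ) (x : V → ℕ) (v : V) : V → ℕ :=
  fun u => x u + a v u - (if u = v then outDeg a v else 0)

/-- The distribution obtained from `x` after firing the vertices in the list
`l`, in order. -/
def run (a : V → V → ℕ) (x : V → ℕ) : List V → (V → ℕ)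
  | [] => x
  | v :: l => run a (fire a x v) l

/-- The sequence of firings `l` starting from the distribution `x` is a legal
game: each fired vertex is active (has at least `outDeg` many chips) when it
is fired. -/
def LegalGame (a : V → V → ℕ) : (V → ℕ) → List V → Prop
  | _, [] => True
  | x, v :: l => outDeg a v ≤ x v ∧ LegalGame a (fire a x v) l

/-- `x` is non-terminating: after any legal game from `x` there is still an
active vertex, so every legal game can be continued indefinitely. -/
def Nonterminating (a : V → V → ℕ) (x : V → ℕ) : Prop :=
  ∀ l : List V, LegalGame a x l → ∃ v, outDeg a v ≤ run a x l v

/-- `x` is terminating: some legal game from `x` reaches a distribution with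
no active vertex. -/
def Terminates (a : V → V → ℕ) (x : V → ℕ) : Prop :=
  ∃ l : List V, LegalGame a x l ∧ ∀ v, run a x l v < outDeg a v

/-- No loops. -/
def Loopless (a : V → V → ℕ) : Prop := ∀ v, a v v = 0

/-- Connectivity of an undirected multigraph `d`. -/
def UConnected (d : V → V → ℕ) : Prop :=
  ∀ u v : V, Relation.ReflTransGen (fun p q => 0 < d p q) u v

/-- Weak connectivity of a digraph `a`. -/
def WConnected (a : V → V → ℕ) : Prop :=
  ∀ u v : V, Relation.ReflTransGen (fun p q => 0 < a p q ∨ 0 < a q p) u v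

/-- A digraph is acyclic if it has no directed cycle. -/
def AcyclicDigraph (a : V → V → ℕ) : Prop :=
  ∀ v : V, ¬ Relation.TransGen (fun p q => 0 < a p q) v v

/-- `a` is an orientation of the undirected multigraph `d`. -/
def IsOrientation (d a : V → V → ℕ) : Prop := ∀ u v, a u v + a v u = d u v

/-- A digraph is Eulerian if `d⁺(v) = d⁻(v)` for every vertex. -/
def EulerianD (a : V → V → ℕ) : Prop := ∀ v, outDeg a v = inDeg a v

/-- `f` is a feedback arc set of the digraph `a`: a subset of the arcs whose
removal leaves an acyclic digraph. -/
def IsFAS (a f : V → V → ℕ) : Prop :=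
  (∀ u v, f u v ≤ a u v) ∧ AcyclicDigraph (fun u v => a u v - f u v)

/-- Number of arcs in an arc set. -/
def arcSize (f : V → V → ℕ) : ℕ := ∑ u, ∑ v, f u v

/-- Degree of a divisor. -/
def divDeg (f : V → ℤ) : ℤ := ∑ v, f v

/-- Effective divisor. -/
def Effective (f : V → ℤ) : Prop := ∀ v, 0 ≤ f v

/-- Linear equivalence of divisors on the multigraph `d`: they differ by an
integer combination of the columns of the Laplacian. -/
def LinEquiv (d : V → V → ℕ) (f g : V → ℤ) : Prop :=
  ∃ z : V → ℤ, ∀ v, g v = f v + ∑ u, (d v u : ℤ) * (z u - z v)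

/-- `r` is the Baker–Norine rank of the divisor `f` on the multigraph `d`. -/
def IsRank (d : V → V → ℕ) (f : V → ℤ) (r : ℤ) : Prop :=
  IsLeast {m : ℤ | ∃ g : V → ℤ, Effective g ∧
    (¬ ∃ h : V → ℤ, Effective h ∧ LinEquiv d (fun v => f v - g v) h) ∧
    m = divDeg g - 1} r

section Aux

lemma run_append (a : V → V → ℕ) (x : V → ℕ) (l₁ l₂ : List V) :
    run a x (l₁ ++ l₂) = run a (run a x l₁) l₂ := by
  induction l₁ generalizing x with
  | nil => simp [run]
  | cons v l ih => simp [run, ih]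

lemma run_notmem (a : V → V → ℕ) (x : V → ℕ) (v : V) (l : List V) (hv : v ∉ l) :
    run a x l v = x v + (l.map (fun u => a u v)).sum := by
  induction l generalizing x with
  | nil => simp [run]
  | cons u l ih =>
    simp only [List.mem_cons, not_or] at hv
    simp only [run, List.map_cons, List.sum_cons]
    rw [ih _ hv.2]
    have : fire a x u v = x v + a u v := by
      simp [fire, if_neg hv.1]
    rw [this]; ring

lemma sum_fire (a : V → V → ℕ) (hloop : Loopless a) (x : V → ℕ) (v₀ : V)
    (h : outDeg a v₀ ≤ x v₀) : ∑ v, fire a x v₀ v = ∑ v, x v := by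
  unfold fire
  rw [Finset.sum_tsub_distrib]
  · rw [Finset.sum_add_distrib, Finset.sum_ite_eq' Finset.univ v₀ (fun _ => outDeg a v₀)]
    simp only [Finset.mem_univ, if_true]
    have : ∑ u, a v₀ u = outDeg a v₀ := rfl
    omega
  · intro v _
    by_cases hv : v = v₀
    · subst hv
      simp [hloop v, h]
    · simp [hv]

lemma sum_run (a : V → V → ℕ) (hloop : Loopless a) (x : V → ℕ) (l : List V)
    (hl : LegalGame a x l) : ∑ v, run a x l v = ∑ v, x v := by
  induction l generalizing x with
  | nil => simp [run]
  | cons v l ih =>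
    obtain ⟨h1, h2⟩ := hl
    simp only [run]
    rw [ih _ h2, sum_fire a hloop x v h1]

lemma indexOf_lt_of_mem_take {u : V} :
    ∀ (L : List V) (n : ℕ), u ∈ L.take n → L.idxOf u < n := by
  intro L
  induction L with
  | nil => intro n h; simp at h
  | cons b L ih =>
    intro n h
    cases n with
    | zero => simp at h
    | succ n =>
      simp only [List.take_succ_cons, List.mem_cons] at h
      by_cases hb : b = u
      · simp [List.idxOf_cons, hb]
      · rcases h with h | h
        · exact absurd h.symm hb
        · have h1 := ih n h
          have h2 : (b :: L).idxOf u = L.idxOf u + 1 := by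
            simp [List.idxOf_cons, hb]
          omega

end Aux

/-- if `x` is non-terminating on a digraph and in some legal game
from `x` every vertex eventually fires, then `|x| ≥ minfas(D)`. -/
theorem stmt9 {V : Type*} [Fintype V] [DecidableEq V]
    (a : V → V → ℕ) (hloop : Loopless a) (hconn : WConnected a)
    (x : V → ℕ) (hx : Nonterminating a x)
    (l : List V) (hl : LegalGame a x l) (hall : ∀ v : V, v ∈ l)
    (m : ℕ) (hm : IsLeast {n : ℕ | ∃ f : V → V → ℕ, IsFAS a f ∧ arcSize f = n} m) :
    m ≤ ∑ v, x v := by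
  classical
  set L := l.reverse with hL
  set t := fun v => L.idxOf v with ht
  set F := fun u v => if t u < t v then a u v else 0 with hF
  have hmemL : ∀ v : V, v ∈ L := fun v => List.mem_reverse.mpr (hall v)
  -- F is a feedback arc set
  have hFle : ∀ u v, F u v ≤ a u v := by
    intro u v; simp only [hF]; split <;> simp
  have hkey : ∀ p q, 0 < a p q - F p q → t q < t p := by
    intro p q h
    have hpq : ¬ t p < t q := by
      intro hlt
      simp only [hF, if_pos hlt] at h
      omega
    have hne : p ≠ q := by
      intro he; subst he
      have := hloop p
      simp only [hF] at h
      omega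
    have : t p ≠ t q := by
      intro he
      exact hne ((List.idxOf_inj (hmemL p)).mp he)
    omega
  have hacyc : AcyclicDigraph (fun u v => a u v - F u v) := by
    intro v hv
    have : ∀ p q, Relation.TransGen (fun p q => 0 < a p q - F p q) p q → t q < t p := by
      intro p q h
      induction h with
      | single h => exact hkey _ _ h
      | tail _ h ih => exact lt_trans (hkey _ _ h) ih
    exact lt_irrefl _ (this v v hv)
  have hFAS : IsFAS a F := ⟨hFle, hacyc⟩
  -- chip bound per vertex
  have hbound : ∀ v : V, ∑ u, F u v ≤ run a x l v := by
    intro v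
    set k := t v with hk
    have hkl : k < L.length := List.idxOf_lt_length_iff.mpr (hmemL v)
    have hgetk : L.get ⟨k, hkl⟩ = v := List.idxOf_get hkl
    have hsplit : L = L.take k ++ v :: L.drop (k + 1) := by
      conv_lhs => rw [← List.take_append_drop k L]
      congr 1
      rw [List.drop_eq_getElem_cons hkl, show L[k] = v from hgetk]
    have hl_eq : l = (L.drop (k + 1)).reverse ++ ([v] ++ (L.take k).reverse) := by
      have : l = L.reverse := by rw [hL, List.reverse_reverse]
      rw [this]
      conv_lhs => rw [hsplit]
      simp
    have hvA : v ∉ (L.take k).reverse := by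
      rw [List.mem_reverse]
      intro hv
      have h1 := indexOf_lt_of_mem_take L k hv
      simp only [hk, ht] at h1
      omega
    have hrun : run a x l v =
        run a x ((L.drop (k + 1)).reverse ++ [v]) v
          + (((L.take k).reverse).map (fun u => a u v)).sum := by
      conv_lhs => rw [hl_eq, ← List.append_assoc]
      rw [run_append, run_notmem _ _ _ _ hvA]
    have step1 : ∑ u, F u v = ∑ u ∈ Finset.univ.filter (fun u => t u < t v), a u v := by
      rw [Finset.sum_filter]
    have hsubset : Finset.univ.filter (fun u => t u < t v) ⊆
        ((L.take k).reverse).toFinset := by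
      intro u hu
      simp only [Finset.mem_filter, Finset.mem_univ, true_and] at hu
      rw [List.toFinset_reverse, List.mem_toFinset]
      have hul : t u < L.length := lt_trans hu hkl
      have : L.get ⟨t u, hul⟩ = u := List.idxOf_get hul
      rw [← this]
      have : (L.take k).get ⟨t u, by simp [List.length_take]; omega⟩ = L.get ⟨t u, hul⟩ := by
        simp
      rw [← this]
      exact List.get_mem _ _
    have step2 : ∑ u ∈ ((L.take k).reverse).toFinset, a u v ≤
        (((L.take k).reverse).map (fun u => a u v)).sum := by
      rw [Finset.sum_list_map_count]
      apply Finset.sum_le_sum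
      intro u hu
      have : 1 ≤ ((L.take k).reverse).count u := by
        rw [List.one_le_count_iff]
        exact List.mem_toFinset.mp hu
      calc a u v = 1 * a u v := (one_mul _).symm
        _ ≤ ((L.take k).reverse).count u * a u v := Nat.mul_le_mul_right _ this
        _ = ((L.take k).reverse).count u • a u v := rfl
    calc ∑ u, F u v = ∑ u ∈ Finset.univ.filter (fun u => t u < t v), a u v := step1
      _ ≤ ∑ u ∈ ((L.take k).reverse).toFinset, a u v :=
          Finset.sum_le_sum_of_subset hsubset
      _ ≤ (((L.take k).reverse).map (fun u => a u v)).sum := step2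
      _ ≤ run a x l v := by omega
  have harc : arcSize F ≤ ∑ v, x v := by
    calc arcSize F = ∑ v, ∑ u, F u v := Finset.sum_comm
      _ ≤ ∑ v, run a x l v := Finset.sum_le_sum (fun v _ => hbound v)
      _ = ∑ v, x v := sum_run a hloop x l hl
  exact le_trans (hm.2 ⟨F, hFAS, rfl⟩) harc
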